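/- Every element of M_{RRB}(A) of order dividing n has a representative 2-cocycle (τ₁, τ₂, ρ, χ) whose values all lie in the group G_n = {z ∈ ℂ^× : zⁿ = 1} of n-th roots of unity. -/
import Mathlib

lemma cx_units_exists_root (n : ℕ) (hn : 0 < n) (z : ℂˣ) : ∃ w : ℂˣ, w ^ n = z := by
  obtain ⟨w, hw⟩ := IsAlgClosed.exists_pow_nat_eq (z : ℂ) hn
  have hw0 : w ≠ 0 := by
    intro h; rw [h, zero_pow hn.ne'] at hw; exact z.ne_zero hw.symm
  exact ⟨Units.mk0 w hw0, by ext; simp [hw]⟩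

/-- Every element of `M_{RRB}(𝒜)` of order dividing `n` has a representative
2-cocycle whose values lie in `Gₙ = {z ∈ ℂˣ : zⁿ = 1}`: if the `n`-th power of the cocycle
`(τ₁, τ₂, ρ, χ)` is a coboundary, then there are `θ₁ : A → ℂˣ`, `θ₂ : B → ℂˣ` such that
the cohomologous cocycle obtained by multiplying with the coboundary of `(θ₁, θ₂)`
takes values in the `n`-th roots of unity. -/
theorem representative_in_roots_of_unity {A B : Type*} [Group A] [Group B]
    (β : B →* MulAut A) (T : A → B)
    (hT : ∀ a₁ a₂ : A, T a₁ * T a₂ = T (a₁ * β (T a₁) a₂))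
    (τ₁ : A → A → ℂˣ) (τ₂ : B → B → ℂˣ) (ρ : A → B → ℂˣ) (χ : A → ℂˣ)
    (hτ₁norm : ∀ a : A, τ₁ a 1 = 1 ∧ τ₁ 1 a = 1)
    (hτ₁ : ∀ a₁ a₂ a₃ : A,
      τ₁ a₂ a₃ * (τ₁ (a₁ * a₂) a₃)⁻¹ * τ₁ a₁ (a₂ * a₃) * (τ₁ a₁ a₂)⁻¹ = 1)
    (hτ₂norm : ∀ b : B, τ₂ b 1 = 1 ∧ τ₂ 1 b = 1)
    (hτ₂ : ∀ b₁ b₂ b₃ : B,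
      τ₂ b₂ b₃ * (τ₂ (b₁ * b₂) b₃)⁻¹ * τ₂ b₁ (b₂ * b₃) * (τ₂ b₁ b₂)⁻¹ = 1)
    (hρnorm : (∀ a : A, ρ a 1 = 1) ∧ (∀ b : B, ρ 1 b = 1)) (hχnorm : χ 1 = 1)
    (hcond1 : ∀ (a : A) (b₁ b₂ : B), ρ a (b₁ * b₂) = ρ (β b₂ a) b₁ * ρ a b₂)
    (hcond2 : ∀ (a₁ a₂ : A) (b : B),
      ρ (a₁ * a₂) b * (ρ a₁ b)⁻¹ * (ρ a₂ b)⁻¹ * τ₁ a₁ a₂ * (τ₁ (β b a₁) (β b a₂))⁻¹ = 1)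
    (hcond3 : ∀ a₁ a₂ : A,
      ρ a₂ (T a₁) * τ₁ a₁ (β (T a₁) a₂) =
        τ₂ (T a₁) (T a₂) * (χ a₂ * (χ (a₁ * β (T a₁) a₂))⁻¹ * χ a₁))
    (n : ℕ) (hn : 0 < n)
    (horder : ∃ (k₁ : A → ℂˣ) (k₂ : B → ℂˣ),
      (∀ a₁ a₂ : A, τ₁ a₁ a₂ ^ n = k₁ a₂ * (k₁ (a₁ * a₂))⁻¹ * k₁ a₁) ∧
      (∀ b₁ b₂ : B, τ₂ b₁ b₂ ^ n = k₂ b₂ * (k₂ (b₁ * b₂))⁻¹ * k₂ b₁) ∧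
      (∀ (a : A) (b : B), ρ a b ^ n = k₁ a * (k₁ (β b a))⁻¹) ∧
      (∀ a : A, χ a ^ n = k₁ a * (k₂ (T a))⁻¹)) :
    ∃ (θ₁ : A → ℂˣ) (θ₂ : B → ℂˣ),
      (∀ a₁ a₂ : A, (τ₁ a₁ a₂ * (θ₁ a₂ * (θ₁ (a₁ * a₂))⁻¹ * θ₁ a₁)) ^ n = 1) ∧
      (∀ b₁ b₂ : B, (τ₂ b₁ b₂ * (θ₂ b₂ * (θ₂ (b₁ * b₂))⁻¹ * θ₂ b₁)) ^ n = 1) ∧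
      (∀ (a : A) (b : B), (ρ a b * (θ₁ a * (θ₁ (β b a))⁻¹)) ^ n = 1) ∧
      (∀ a : A, (χ a * (θ₁ a * (θ₂ (T a))⁻¹)) ^ n = 1) := by
  obtain ⟨k₁, k₂, h1, h2, h3, h4⟩ := horder
  choose θ₁ hθ₁ using fun a => cx_units_exists_root n hn (k₁ a)⁻¹
  choose θ₂ hθ₂ using fun b => cx_units_exists_root n hn (k₂ b)⁻¹
  refine ⟨θ₁, θ₂, ?_, ?_, ?_, ?_⟩
  · intro a₁ a₂
    simp only [mul_pow, inv_pow, hθ₁, h1]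
    group
    simp [zpow_neg, mul_comm, mul_left_comm, mul_assoc]
  · intro b₁ b₂
    simp only [mul_pow, inv_pow, hθ₂, h2]
    group
    simp [zpow_neg, mul_comm, mul_left_comm, mul_assoc]
  · intro a b
    simp only [mul_pow, inv_pow, hθ₁, h3]
    group
    simp [zpow_neg, mul_comm, mul_left_comm, mul_assoc]
  · intro a
    simp only [mul_pow, inv_pow, hθ₁, hθ₂, h4]
    group
    simp [zpow_neg, mul_comm, mul_left_comm, mul_assoc]
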